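/- If B is a left brace with additive group A, then H := {(a, λ_a) : a ∈ B} is a regular subgroup of Hol(A) = A ⋊ Aut(A); that is, H is a subgroup and for every w ∈ A there exists a unique element (v, M) ∈ H with v + M(w) = 0. -/

import Mathlib

instance AddAut.group (A : Type*) [Add A] : Group (AddAut A) where
  mul g h := AddEquiv.trans h g
  one := AddEquiv.refl _
  inv := AddEquiv.symm
  mul_assoc _ _ _ := rfl
  one_mul _ := rfl
  mul_one _ := rfl
  inv_mul_cancel := AddEquiv.self_trans_symm

def holAction (A : Type*) [AddCommGroup A] : AddAut A →* MulAut (Multiplicative A) where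
  toFun f := AddEquiv.toMultiplicative f
  map_one' := rfl
  map_mul' _ _ := rfl

/-- The holomorph `Hol(A) = A ⋊ Aut(A)` of an additive abelian group `A`. -/
abbrev Hol (A : Type*) [AddCommGroup A] :=
  SemidirectProduct (Multiplicative A) (AddAut A) (holAction A)

/-- If `B` is a left brace with additive group `A = (B,+)`, then
`H = {(a, λ_a) : a ∈ B}` is a regular subgroup of `Hol(A)`: it is a subgroup, and
for every `w ∈ A` there is a unique `(v, M) ∈ H` with `v + M(w) = 0`. -/
theorem stmt2 (B : Type*) [AddCommGroup B] [Group B]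
    (brace : ∀ a b c : B, a * (b + c) + a = a * b + a * c)
    (lam : B →* AddAut B) (hlam : ∀ g h : B, lam g h = g * h - g) :
    ∃ H : Subgroup (Hol B),
      (∀ x : Hol B, x ∈ H ↔ ∃ a : B, x = ⟨Multiplicative.ofAdd a, lam a⟩) ∧
      ∀ w : B, ∃! x : Hol B, x ∈ H ∧ Multiplicative.toAdd x.left + x.right w = 0 := by
  have h01 : (0 : B) = 1 := by
    have h0 : ∀ g : B, g * 0 = g := by
      intro g
      have h := hlam g 0
      rw [map_zero] at h
      have := sub_eq_zero.mp h.symm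
      exact this
    have := h0 1
    calc (0 : B) = 1 * 0 := (one_mul 0).symm
      _ = 1 := h0 1
  have key : ∀ a b : B,
      (⟨Multiplicative.ofAdd a, lam a⟩ : Hol B) * ⟨Multiplicative.ofAdd b, lam b⟩
        = ⟨Multiplicative.ofAdd (a * b), lam (a * b)⟩ := by
    intro a b
    have hleft : Multiplicative.ofAdd a * (holAction B (lam a)) (Multiplicative.ofAdd b)
        = Multiplicative.ofAdd (a * b) := by
      show Multiplicative.ofAdd a * Multiplicative.ofAdd (lam a b) = Multiplicative.ofAdd (a * b)
      rw [← ofAdd_add, hlam]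
      congr 1
      abel
    apply SemidirectProduct.ext
    · exact hleft
    · simp [map_mul]
  have hone : (⟨Multiplicative.ofAdd (1 : B), lam 1⟩ : Hol B) = 1 := by
    apply SemidirectProduct.ext
    · show Multiplicative.ofAdd (1 : B) = Multiplicative.ofAdd (0 : B)
      rw [h01]
    · simp
  refine ⟨{ carrier := {x | ∃ a : B, x = ⟨Multiplicative.ofAdd a, lam a⟩}
            mul_mem' := ?_
            one_mem' := ?_
            inv_mem' := ?_ }, fun x => Iff.rfl, ?_⟩
  · rintro x y ⟨a, rfl⟩ ⟨b, rfl⟩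
    exact ⟨a * b, key a b⟩
  · exact ⟨1, hone.symm⟩
  · rintro x ⟨a, rfl⟩
    refine ⟨a⁻¹, ?_⟩
    rw [inv_eq_iff_mul_eq_one, key, mul_inv_cancel]
    exact hone
  · intro w
    have cond : ∀ a : B, (Multiplicative.toAdd
        ((⟨Multiplicative.ofAdd a, lam a⟩ : Hol B).left)
          + (⟨Multiplicative.ofAdd a, lam a⟩ : Hol B).right w = 0) ↔ a * w = 1 := by
      intro a
      show a + lam a w = 0 ↔ a * w = 1
      rw [hlam, h01]
      constructor
      · intro h
        rw [← h]; abel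
      · intro h
        rw [h]; abel
    refine ⟨⟨Multiplicative.ofAdd w⁻¹, lam w⁻¹⟩, ⟨⟨w⁻¹, rfl⟩, (cond w⁻¹).mpr (inv_mul_cancel w)⟩, ?_⟩
    rintro x ⟨⟨a, rfl⟩, hx⟩
    have : a * w = 1 := (cond a).mp hx
    have ha : a = w⁻¹ := eq_inv_of_mul_eq_one_left this
    rw [ha]
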